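/- (Simultaneous true discovery guarantee from e-Closure.) Let α ∈ (0,1] and let E = (e_S)_{S ⊆ [m]} be an e-collection. For R ⊆ [m] and ω ∈ Ω define d_E(R)(ω) = max{d ∈ {0,1,…,m} : e_S(ω) ≥ (1/α)·1{|R∖S| < d} for all S ⊆ [m]} (the defining set always contains d = 0). Then: (i) for every P ∈ M, P({ω : d_E(R)(ω) ≤ |R ∖ N_P| for all R ⊆ [m]}) ≥ 1 − α. (ii) If moreover e_S(ω) = φ_S(ω)/α for a family (φ_S)_{S ⊆ [m]} of {0,1}-valued measurable functions, then for every R ⊆ [m] and ω ∈ Ω, d_E(R)(ω) = min{|R∖S| : S ⊆ [m], φ_S(ω) = 0}, with the convention that the minimum over the empty set equals m. -/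

import Mathlib

open MeasureTheory

open Classical in
/-- The closed true-discovery bound
d_E(R)(ω) = max{d ∈ {0,…,m} : e_S(ω) ≥ (1/α)·1{|R∖S| < d} for all S}. -/
noncomputable def dE {m : ℕ} {Ω : Type*} (E : Finset (Fin m) → Ω → ℝ) (α : ℝ)
    (R : Finset (Fin m)) (ω : Ω) : ℕ :=
  ((Finset.range (m + 1)).filter
    (fun d => ∀ S : Finset (Fin m),
      (if (R \ S).card < d then 1 / α else 0) ≤ E S ω)).sup id

open Classical in
private lemma dE_mem_filter {m : ℕ} {Ω : Type*} (E : Finset (Fin m) → Ω → ℝ) (α : ℝ)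
    (hE0 : ∀ S ω, 0 ≤ E S ω) (R : Finset (Fin m)) (ω : Ω) :
    dE E α R ω ∈ ((Finset.range (m + 1)).filter
      (fun d => ∀ S : Finset (Fin m),
        (if (R \ S).card < d then 1 / α else 0) ≤ E S ω)) := by
  have hne : ((Finset.range (m + 1)).filter
      (fun d => ∀ S : Finset (Fin m),
        (if (R \ S).card < d then 1 / α else 0) ≤ E S ω)).Nonempty := by
    refine ⟨0, Finset.mem_filter.2 ⟨Finset.mem_range.2 (Nat.succ_pos m), fun S => ?_⟩⟩
    simp [hE0 S ω]
  obtain ⟨d, hd, hsup⟩ := Finset.exists_mem_eq_sup _ hne id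
  rw [dE, hsup]; exact hd

open Classical in
private lemma measurable_dE {m : ℕ} {Ω : Type*} [MeasurableSpace Ω]
    (E : Finset (Fin m) → Ω → ℝ) (α : ℝ) (hEmeas : ∀ S, Measurable (E S))
    (R : Finset (Fin m)) : Measurable (dE E α R) := by
  have h : dE E α R = fun ω => (Finset.range (m + 1)).sup
      (fun d => if (∀ S : Finset (Fin m),
        (if (R \ S).card < d then 1 / α else 0) ≤ E S ω) then d else 0) := by
    funext ω
    apply le_antisymm
    · apply Finset.sup_le
      intro d hd
      rw [Finset.mem_filter] at hd
      have h2 : (if (∀ S : Finset (Fin m),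
            (if (R \ S).card < d then 1 / α else 0) ≤ E S ω) then d else 0)
          ≤ (Finset.range (m + 1)).sup (fun d => if (∀ S : Finset (Fin m),
            (if (R \ S).card < d then 1 / α else 0) ≤ E S ω) then d else 0) :=
        Finset.le_sup (f := fun d => if (∀ S : Finset (Fin m),
          (if (R \ S).card < d then 1 / α else 0) ≤ E S ω) then d else 0) hd.1
      rw [if_pos hd.2] at h2
      exact h2
    · apply Finset.sup_le
      intro d hd
      by_cases hP : ∀ S : Finset (Fin m), (if (R \ S).card < d then 1 / α else 0) ≤ E S ω
      · rw [if_pos hP]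
        exact Finset.le_sup (f := id) (Finset.mem_filter.2 ⟨hd, hP⟩)
      · rw [if_neg hP]
        exact Nat.zero_le _
  rw [h]
  have : ∀ d : ℕ, Measurable (fun ω : Ω => if (∀ S : Finset (Fin m),
      (if (R \ S).card < d then 1 / α else 0) ≤ E S ω) then d else (0:ℕ)) := by
    intro d
    apply Measurable.ite ?_ measurable_const measurable_const
    have : {ω : Ω | ∀ S : Finset (Fin m),
        (if (R \ S).card < d then 1 / α else 0) ≤ E S ω}
        = ⋂ S : Finset (Fin m), {ω : Ω | (if (R \ S).card < d then 1 / α else 0) ≤ E S ω} := by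
      ext ω; simp
    rw [this]
    exact MeasurableSet.iInter fun S => measurableSet_le measurable_const (hEmeas S)
  revert this
  generalize (fun (d : ℕ) (ω : Ω) => if (∀ S : Finset (Fin m),
      (if (R \ S).card < d then 1 / α else 0) ≤ E S ω) then d else (0:ℕ)) = f
  intro hf
  induction (Finset.range (m + 1)) using Finset.induction with
  | empty => simpa using measurable_const
  | insert h _ _ ih =>
      simp only [Finset.sup_insert]
      exact (hf _).sup ih

/-- Simultaneous true discovery guarantee from e-Closure: (i) with probability
at least 1 − α, d_E(R) ≤ |R ∖ N_P| simultaneously for all R; (ii) if e_S = φ_S/α for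
{0,1}-valued local tests φ, then d_E(R) = min{|R∖S| : φ_S = 0} (= m when no φ_S vanishes). -/
theorem statement_18 (m : ℕ) (hm : 1 ≤ m) {Ω : Type*} [MeasurableSpace Ω]
    (M : Set (Measure Ω)) (hM : ∀ P ∈ M, IsProbabilityMeasure P)
    (H : Fin m → Set (Measure Ω))
    (N : Measure Ω → Finset (Fin m)) (hN : ∀ P i, i ∈ N P ↔ P ∈ H i)
    (α : ℝ) (hα : α ∈ Set.Ioc (0 : ℝ) 1)
    (E : Finset (Fin m) → Ω → ℝ)
    (hEmeas : ∀ S, Measurable (E S)) (hE0 : ∀ S ω, 0 ≤ E S ω)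
    (hEint : ∀ P ∈ M, ∫⁻ ω, ENNReal.ofReal (E (N P) ω) ∂P ≤ 1) :
    -- (i)
    (∀ P ∈ M,
      ENNReal.ofReal (1 - α) ≤
        P {ω | ∀ R : Finset (Fin m), dE E α R ω ≤ (R \ N P).card}) ∧
    -- (ii)
    (∀ φ : Finset (Fin m) → Ω → ℝ,
      (∀ S, Measurable (φ S)) → (∀ S ω, φ S ω = 0 ∨ φ S ω = 1) →
      (∀ S ω, E S ω = φ S ω / α) →
      ∀ (R : Finset (Fin m)) (ω : Ω),
        dE E α R ω =
          if h : (Finset.univ.filter fun S : Finset (Fin m) => φ S ω = 0).Nonempty then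
            (Finset.univ.filter fun S : Finset (Fin m) => φ S ω = 0).inf' h
              (fun S => (R \ S).card)
          else m) := by
  classical
  obtain ⟨hα0, hα1⟩ := hα
  constructor
  · -- part (i)
    intro P hP
    haveI := hM P hP
    set good : Set Ω := {ω | ∀ R : Finset (Fin m), dE E α R ω ≤ (R \ N P).card} with hgood
    have hmeas : MeasurableSet good := by
      have : good = ⋂ R : Finset (Fin m), {ω | dE E α R ω ≤ (R \ N P).card} := by
        ext ω; simp [hgood]
      rw [this]
      exact MeasurableSet.iInter fun R =>
        measurableSet_le (measurable_dE E α hEmeas R) measurable_const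
    -- complement of good is contained in {ω | 1/α ≤ E (N P) ω}
    have hsub : goodᶜ ⊆ {ω | ENNReal.ofReal (1 / α) ≤ ENNReal.ofReal (E (N P) ω)} := by
      intro ω hω
      simp only [hgood, Set.mem_compl_iff, Set.mem_setOf_eq, not_forall, not_le] at hω
      obtain ⟨R, hR⟩ := hω
      have hd := dE_mem_filter E α hE0 R ω
      rw [Finset.mem_filter] at hd
      have := hd.2 (N P)
      rw [if_pos hR] at this
      exact ENNReal.ofReal_le_ofReal this
    have hmarkov : P goodᶜ ≤ ENNReal.ofReal α := by
      calc P goodᶜ ≤ P {ω | ENNReal.ofReal (1 / α) ≤ ENNReal.ofReal (E (N P) ω)} :=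
            measure_mono hsub
        _ ≤ (∫⁻ ω, ENNReal.ofReal (E (N P) ω) ∂P) / ENNReal.ofReal (1 / α) := by
            apply meas_ge_le_lintegral_div
              ((ENNReal.measurable_ofReal.comp (hEmeas (N P))).aemeasurable)
            · exact (ENNReal.ofReal_pos.2 (by positivity)).ne'
            · exact ENNReal.ofReal_ne_top
        _ ≤ 1 / ENNReal.ofReal (1 / α) := by
            gcongr
            exact hEint P hP
        _ = ENNReal.ofReal α := by
            rw [ENNReal.ofReal_div_of_pos hα0, ENNReal.ofReal_one, one_div, one_div, inv_inv]
    have : 1 - ENNReal.ofReal α ≤ P good := by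
      have hc : P good = 1 - P goodᶜ := by
        rw [prob_compl_eq_one_sub hmeas]
        exact (ENNReal.sub_sub_cancel ENNReal.one_ne_top prob_le_one).symm
      rw [hc]
      exact tsub_le_tsub_left hmarkov 1
    refine le_trans ?_ this
    rw [ENNReal.ofReal_sub 1 (le_of_lt hα0), ENNReal.ofReal_one]
  · -- part (ii)
    intro φ hφmeas hφ01 hEφ R ω
    set Z := Finset.univ.filter (fun S : Finset (Fin m) => φ S ω = 0) with hZ
    have hcharac : ∀ d : ℕ,
        (∀ S : Finset (Fin m), (if (R \ S).card < d then 1 / α else 0) ≤ E S ω)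
        ↔ (∀ S ∈ Z, d ≤ (R \ S).card) := by
      intro d
      constructor
      · intro h S hS
        rw [hZ, Finset.mem_filter] at hS
        have := h S
        rw [hEφ S ω, hS.2, zero_div] at this
        by_contra hlt
        rw [if_pos (Nat.lt_of_not_le hlt)] at this
        have : (0:ℝ) < 1 / α := by positivity
        linarith
      · intro h S
        rcases hφ01 S ω with h0 | h1
        · have hSZ : S ∈ Z := by rw [hZ, Finset.mem_filter]; exact ⟨Finset.mem_univ S, h0⟩
          rw [hEφ S ω, h0, zero_div, if_neg (Nat.not_lt.2 (h S hSZ))]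
        · rw [hEφ S ω, h1]
          split
          · exact le_refl _
          · positivity
    have hcardle : ∀ S : Finset (Fin m), (R \ S).card ≤ m := fun S =>
      le_trans (Finset.card_le_card (Finset.subset_univ _)) (by simp)
    by_cases h : Z.Nonempty
    · rw [dif_pos h]
      set k := Z.inf' h (fun S => (R \ S).card) with hk
      apply le_antisymm
      · apply Finset.sup_le
        intro d hd
        rw [Finset.mem_filter] at hd
        exact Finset.le_inf' h _ ((hcharac d).1 hd.2)
      · refine Finset.le_sup (f := id) (Finset.mem_filter.2 ⟨?_, (hcharac k).2 ?_⟩)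
        · rw [Finset.mem_range, Nat.lt_succ_iff]
          obtain ⟨S₀, hS₀⟩ := h
          exact le_trans (Finset.inf'_le _ hS₀) (hcardle S₀)
        · intro S hS
          exact Finset.inf'_le _ hS
    · rw [dif_neg h]
      have hall : ∀ d : ℕ,
          (∀ S : Finset (Fin m), (if (R \ S).card < d then 1 / α else 0) ≤ E S ω) := by
        intro d
        rw [hcharac d]
        intro S hS
        exact absurd ⟨S, hS⟩ h
      apply le_antisymm
      · apply Finset.sup_le
        intro d hd
        rw [Finset.mem_filter, Finset.mem_range, Nat.lt_succ_iff] at hd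
        exact hd.1
      · exact Finset.le_sup (f := id)
          (Finset.mem_filter.2 ⟨Finset.mem_range.2 (Nat.lt_succ_self m), hall m⟩)
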